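/- Let U be a vector space over ℂ, z a nonzero complex number, k a nonnegative integer, and let f(x) = ∑_{n∈ℤ} f_n x^{-n-1} and g(x) = ∑_{n∈ℤ} g_n x^{-n-1} be formal Laurent series with coefficients in U. Suppose f(x) ∈ U((x)) (only finitely many negative powers of x appear, i.e., f is truncated below) and (x-z)^k f(x) = (x-z)^k g(x). Then for every n ∈ ℤ, the coefficient f_n lies in the linear span of {g_m | m ≥ n}. -/
import Mathlib


/-- If `f(x) = ∑ₙ fₙ x^{-n-1} ∈ U((x))` (truncated below, i.e. only finitely
many negative powers of `x`) and `(x-z)^k f(x) = (x-z)^k g(x)`, then each `fₙ` lies in the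
span of `{g_m | m ≥ n}`.  The coefficient of `x^{-n-1}` in `(x-z)^k h(x)` is
`∑_{i=0}^{k} C(k,i) (-z)^i h_{n+k-i}`. -/
theorem stmt0 (U : Type*) [AddCommGroup U] [Module ℂ U] (z : ℂ) (hz : z ≠ 0) (k : ℕ)
    (f g : ℤ → U)
    (hf : ∃ N : ℤ, ∀ n ≥ N, f n = 0)
    (hfg : ∀ n : ℤ,
      ∑ i ∈ Finset.range (k + 1), ((k.choose i : ℂ) * (-z) ^ i) • f (n + k - i)
        = ∑ i ∈ Finset.range (k + 1), ((k.choose i : ℂ) * (-z) ^ i) • g (n + k - i)) :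
    ∀ n : ℤ, f n ∈ Submodule.span ℂ (g '' {m : ℤ | n ≤ m}) := by
  obtain ⟨N, hN⟩ := hf
  have key : ∀ d : ℕ, ∀ n : ℤ, N - n ≤ d → f n ∈ Submodule.span ℂ (g '' {m : ℤ | n ≤ m}) := by
    intro d
    induction d with
    | zero =>
      intro n hn
      have : f n = 0 := hN n (by omega)
      simp [this]
    | succ d ih =>
      intro n hn
      by_cases hnN : N ≤ n
      · have : f n = 0 := hN n hnN
        simp [this]
      · have hzk : (-z) ^ k ≠ 0 := pow_ne_zero _ (neg_ne_zero.mpr hz)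
        have hfn : ((-z) ^ k) • f n =
            (∑ i ∈ Finset.range (k + 1), ((k.choose i : ℂ) * (-z) ^ i) • g (n + k - i))
            - ∑ i ∈ Finset.range k, ((k.choose i : ℂ) * (-z) ^ i) • f (n + k - i) := by
          have h := hfg n
          rw [Finset.sum_range_succ] at h
          have hnk : (n : ℤ) + k - k = n := by omega
          rw [hnk, Nat.choose_self] at h
          rw [eq_sub_iff_add_eq, add_comm, ← h]
          simp
        have hmem : ((-z) ^ k) • f n ∈ Submodule.span ℂ (g '' {m : ℤ | n ≤ m}) := by
          rw [hfn]
          apply sub_mem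
          · apply Submodule.sum_mem
            intro i hi
            apply Submodule.smul_mem
            apply Submodule.subset_span
            exact ⟨n + k - i, by
              simp only [Set.mem_setOf_eq]
              simp only [Finset.mem_range] at hi
              omega, rfl⟩
          · apply Submodule.sum_mem
            intro i hi
            simp only [Finset.mem_range] at hi
            apply Submodule.smul_mem
            have h1 : f (n + k - i) ∈ Submodule.span ℂ (g '' {m : ℤ | n + k - i ≤ m}) :=
              ih (n + k - i) (by omega)
            refine Submodule.span_mono ?_ h1
            apply Set.image_mono
            intro m hm
            simp only [Set.mem_setOf_eq] at hm ⊢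
            omega
        have := Submodule.smul_mem _ (((-z) ^ k)⁻¹) hmem
        rwa [smul_smul, inv_mul_cancel₀ hzk, one_smul] at this
  intro n
  rcases le_or_gt N n with h | h
  · simp [hN n h]
  · exact key (N - n).toNat n (by omega)
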